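/- Let h₁ : ℝⁿ → ℝ ∪ {+∞} be a proper lower semicontinuous convex function, τ > 0, x̄ ∈ ℝⁿ, and u₁, u₂ ∈ ℝⁿ linearly independent such that B = τI + u₁u₁ᵀ − u₂u₂ᵀ is positive definite. Define ζ(α) = x̄ − (α₁/τ)u₁ + α₂(τI + u₁u₁ᵀ)⁻¹u₂ for α = (α₁, α₂) ∈ ℝ², and define the map 𝓛 : ℝ² → ℝ² by 𝓛(α) = ( u₁ᵀ(x̄ + α₂(τI + u₁u₁ᵀ)⁻¹u₂ − Prox_{(1/τ)h₁}(ζ(α))) + α₁ , u₂ᵀ(x̄ − Prox_{(1/τ)h₁}(ζ(α))) + α₂ ). Then 𝓛(α) = 0 has exactly one solution α* ∈ ℝ². -/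

import Mathlib

open Matrix Filter Topology RealInnerProductSpace

noncomputable section

/-- `n`-dimensional Euclidean space. -/
abbrev Euc (n : ℕ) := EuclideanSpace ℝ (Fin n)

/-- `v` is a subgradient of the extended-real-valued convex function `φ` at `x`. -/
def ESubgradAt {n : ℕ} (φ : Euc n → EReal) (v x : Euc n) : Prop :=
  ∀ y : Euc n, φ x + ((⟪v, y - x⟫ : ℝ) : EReal) ≤ φ y

/-- `v` is a subgradient of the real-valued convex function `φ` at `x`. -/
def RSubgradAt {n : ℕ} (φ : Euc n → ℝ) (v x : Euc n) : Prop :=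
  ∀ y : Euc n, φ x + ⟪v, y - x⟫ ≤ φ y

/-- Convexity of an extended-real-valued function. -/
def EConvexF {n : ℕ} (φ : Euc n → EReal) : Prop :=
  ∀ x y : Euc n, ∀ a b : ℝ, 0 ≤ a → 0 ≤ b → a + b = 1 →
    φ (a • x + b • y) ≤ (a : EReal) * φ x + (b : EReal) * φ y

/-- Properness of an extended-real-valued function: never `⊥` and finite somewhere. -/
def ProperF {n : ℕ} (φ : Euc n → EReal) : Prop :=
  (∀ x, φ x ≠ ⊥) ∧ (∃ x, φ x ≠ ⊤)

/-- The quadratic form `uᵀ B u`. -/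
def quadF {n : ℕ} (B : Matrix (Fin n) (Fin n) ℝ) (u : Euc n) : ℝ :=
  ⟪u, (Matrix.toEuclideanLin B) u⟫

/-- The scaled norm `‖u‖_B = √(uᵀ B u)`. -/
def MNorm {n : ℕ} (B : Matrix (Fin n) (Fin n) ℝ) (u : Euc n) : ℝ :=
  Real.sqrt (quadF B u)

/-- The objective `f = g + h₁ - h₂`. -/
def fObj {n : ℕ} (g : Euc n → ℝ) (h₁ : Euc n → EReal) (h₂ : Euc n → ℝ) (x : Euc n) : EReal :=
  (g x : EReal) + h₁ x - (h₂ x : EReal)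

/-- `p` is the proximal point `Prox_{(1/τ)h₁}(y)`, i.e. the minimizer of
`(1/τ)h₁(·) + ½‖· - y‖²`. -/
def IsProxPt {n : ℕ} (τ : ℝ) (h₁ : Euc n → EReal) (y p : Euc n) : Prop :=
  ∀ w : Euc n, ((τ⁻¹ : ℝ) : EReal) * h₁ p + ((‖p - y‖ ^ 2 / 2 : ℝ) : EReal) ≤
    ((τ⁻¹ : ℝ) : EReal) * h₁ w + ((‖w - y‖ ^ 2 / 2 : ℝ) : EReal)

/-- The matrix `τI + u₁u₁ᵀ`. -/
def Amat {n : ℕ} (τ : ℝ) (u₁ : Euc n) : Matrix (Fin n) (Fin n) ℝ :=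
  τ • (1 : Matrix (Fin n) (Fin n) ℝ) + Matrix.vecMulVec (u₁ : Fin n → ℝ) (u₁ : Fin n → ℝ)

/-- The matrix `B = τI + u₁u₁ᵀ - u₂u₂ᵀ`. -/
def Bprox {n : ℕ} (τ : ℝ) (u₁ u₂ : Euc n) : Matrix (Fin n) (Fin n) ℝ :=
  Amat τ u₁ - Matrix.vecMulVec (u₂ : Fin n → ℝ) (u₂ : Fin n → ℝ)

/-- `ζ(α) = x̄ - (α₁/τ)u₁ + α₂(τI + u₁u₁ᵀ)⁻¹u₂`. -/
def zetaMap {n : ℕ} (τ : ℝ) (u₁ u₂ xb : Euc n) (α : ℝ × ℝ) : Euc n :=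
  xb - (α.1 / τ) • u₁ + α.2 • (Matrix.toEuclideanLin (Amat τ u₁)⁻¹) u₂

/-- The semi-smooth map `𝓛 : ℝ² → ℝ²`, where `P = Prox_{(1/τ)h₁}`. -/
def Lmap {n : ℕ} (τ : ℝ) (u₁ u₂ xb : Euc n) (P : Euc n → Euc n) (α : ℝ × ℝ) : ℝ × ℝ :=
  (⟪u₁, xb + α.2 • (Matrix.toEuclideanLin (Amat τ u₁)⁻¹) u₂ - P (zetaMap τ u₁ u₂ xb α)⟫ + α.1,
   ⟪u₂, xb - P (zetaMap τ u₁ u₂ xb α)⟫ + α.2)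

/-- `p` is the scaled proximal point `Prox_{h₁}^{B}(y)`, i.e. the minimizer of
`h₁(·) + ½‖· - y‖_B²`. -/
def IsScaledProxPt {n : ℕ} (B : Matrix (Fin n) (Fin n) ℝ) (h₁ : Euc n → EReal)
    (y p : Euc n) : Prop :=
  ∀ w : Euc n, h₁ p + ((quadF B (p - y) / 2 : ℝ) : EReal) ≤
    h₁ w + ((quadF B (w - y) / 2 : ℝ) : EReal)

/-! ### Auxiliary lemmas -/

section AuxLemmas

variable {n : ℕ}

lemma euc_inner_eq_dot (x y : Euc n) :
    (⟪x, y⟫ : ℝ) = dotProduct (x : Fin n → ℝ) (y : Fin n → ℝ) := by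
  simp [PiLp.inner_apply, RCLike.inner_apply, dotProduct, starRingEnd_apply]
  exact Finset.sum_congr rfl fun i _ => mul_comm _ _

lemma toEuc_apply_fun (M : Matrix (Fin n) (Fin n) ℝ) (v : Euc n) :
    (Matrix.toEuclideanLin M v : Fin n → ℝ) = M *ᵥ (v : Fin n → ℝ) := rfl

lemma euc_ext {x y : Euc n} (h : ∀ i, x i = y i) : x = y := by
  exact PiLp.ext h

lemma vecMulVec_mulVec' (a b v : Fin n → ℝ) :
    Matrix.vecMulVec a b *ᵥ v = (dotProduct b v) • a := by
  ext i
  simp [Matrix.vecMulVec, Matrix.mulVec, dotProduct, Finset.mul_sum, mul_comm, mul_assoc,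
    mul_left_comm]

lemma Amat_apply (τ : ℝ) (u₁ v : Euc n) :
    Matrix.toEuclideanLin (Amat τ u₁) v = τ • v + (⟪u₁, v⟫ : ℝ) • u₁ := by
  apply euc_ext; intro i
  have h : (Matrix.toEuclideanLin (Amat τ u₁) v : Fin n → ℝ) = (Amat τ u₁) *ᵥ (v : Fin n → ℝ) :=
    rfl
  rw [show (Matrix.toEuclideanLin (Amat τ u₁) v) i = ((Amat τ u₁) *ᵥ (v : Fin n → ℝ)) i from
    congrFun h i]
  rw [Amat, Matrix.add_mulVec, vecMulVec_mulVec', euc_inner_eq_dot]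
  simp [Matrix.smul_mulVec, Matrix.one_mulVec]

lemma Bmat_apply (τ : ℝ) (u₁ u₂ v : Euc n) :
    Matrix.toEuclideanLin (Bprox τ u₁ u₂) v
      = τ • v + (⟪u₁, v⟫ : ℝ) • u₁ - (⟪u₂, v⟫ : ℝ) • u₂ := by
  have h : Matrix.toEuclideanLin (Bprox τ u₁ u₂) v
      = Matrix.toEuclideanLin (Amat τ u₁) v
        - Matrix.toEuclideanLin (Matrix.vecMulVec (u₂ : Fin n → ℝ) (u₂ : Fin n → ℝ)) v := by
    rw [Bprox, map_sub]; rfl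
  rw [h, Amat_apply]
  congr 1
  apply euc_ext; intro i
  rw [show (Matrix.toEuclideanLin (Matrix.vecMulVec (u₂ : Fin n → ℝ) (u₂ : Fin n → ℝ)) v
      : Fin n → ℝ)
      = Matrix.vecMulVec (u₂ : Fin n → ℝ) (u₂ : Fin n → ℝ) *ᵥ (v : Fin n → ℝ) from rfl]
  rw [vecMulVec_mulVec', euc_inner_eq_dot]
  rfl

lemma posdef_inner {M : Matrix (Fin n) (Fin n) ℝ} (hM : M.PosDef) {v : Euc n} (hv : v ≠ 0) :
    0 < (⟪v, Matrix.toEuclideanLin M v⟫ : ℝ) := by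
  rw [euc_inner_eq_dot, toEuc_apply_fun]
  have hv' : (v : Fin n → ℝ) ≠ 0 := fun h => hv (euc_ext fun i => congrFun h i)
  have := hM.dotProduct_mulVec_pos hv'
  simpa [star_trivial] using this

lemma transpose_eq_of_hermitian {M : Matrix (Fin n) (Fin n) ℝ} (hM : M.IsHermitian) : Mᵀ = M := by
  rw [← Matrix.conjTranspose_eq_transpose_of_trivial]; exact hM

lemma symm_inner {M : Matrix (Fin n) (Fin n) ℝ} (hM : Mᵀ = M) (a b : Euc n) :
    (⟪Matrix.toEuclideanLin M a, b⟫ : ℝ) = ⟪a, Matrix.toEuclideanLin M b⟫ := by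
  rw [euc_inner_eq_dot, euc_inner_eq_dot, toEuc_apply_fun, toEuc_apply_fun]
  rw [Matrix.dotProduct_mulVec, dotProduct_comm, Matrix.dotProduct_mulVec,
    ← Matrix.mulVec_transpose, hM, dotProduct_comm]
  rw [Matrix.dotProduct_mulVec, ← Matrix.mulVec_transpose, hM]

lemma Amat_posdef (τ : ℝ) (hτ : 0 < τ) (u₁ : Euc n) : (Amat τ u₁).PosDef := by
  rw [Matrix.posDef_iff_dotProduct_mulVec]
  constructor
  · rw [Matrix.IsHermitian, Matrix.conjTranspose_eq_transpose_of_trivial]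
    rw [Amat, Matrix.transpose_add, Matrix.transpose_smul, Matrix.transpose_one]
    congr 1
    ext i j
    simp [Matrix.vecMulVec_apply, mul_comm]
  · intro x hx
    have key : dotProduct (star x) ((Amat τ u₁) *ᵥ x)
        = τ * dotProduct x x
          + (dotProduct (u₁ : Fin n → ℝ) x) * (dotProduct (u₁ : Fin n → ℝ) x) := by
      rw [star_trivial, Amat, Matrix.add_mulVec, vecMulVec_mulVec',
        Matrix.smul_mulVec, Matrix.one_mulVec]
      rw [dotProduct_add, dotProduct_smul, dotProduct_smul, smul_eq_mul, smul_eq_mul]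
      rw [dotProduct_comm x (u₁ : Fin n → ℝ)]
    have hxx : 0 < dotProduct x x := by
      have h0 : (0:ℝ) ≤ dotProduct x x := by
        rw [dotProduct]; exact Finset.sum_nonneg fun i _ => mul_self_nonneg _
      rcases eq_or_lt_of_le h0 with h | h
      · exfalso; apply hx; funext i
        by_contra hxi
        have hlt : 0 < x i * x i := mul_self_pos.mpr hxi
        have hpos : 0 < dotProduct x x := by
          rw [dotProduct]
          exact Finset.sum_pos' (fun j _ => mul_self_nonneg _) ⟨i, Finset.mem_univ i, hlt⟩
        rw [← h] at hpos; exact lt_irrefl _ hpos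
      · exact h
    rw [key]
    nlinarith [mul_self_nonneg (dotProduct (u₁ : Fin n → ℝ) x)]

lemma toEuc_comp (M N : Matrix (Fin n) (Fin n) ℝ) (v : Euc n) :
    Matrix.toEuclideanLin M (Matrix.toEuclideanLin N v) = Matrix.toEuclideanLin (M * N) v := by
  apply euc_ext; intro i
  have h1 : (Matrix.toEuclideanLin M (Matrix.toEuclideanLin N v) : Fin n → ℝ)
      = M *ᵥ (N *ᵥ (v : Fin n → ℝ)) := rfl
  have h2 : (Matrix.toEuclideanLin (M * N) v : Fin n → ℝ) = (M * N) *ᵥ (v : Fin n → ℝ) := rfl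
  rw [congrFun h1 i, congrFun h2 i, Matrix.mulVec_mulVec]

lemma Amat_inv_id (τ : ℝ) (hτ : 0 < τ) (u₁ w : Euc n) :
    Matrix.toEuclideanLin (Amat τ u₁) (Matrix.toEuclideanLin (Amat τ u₁)⁻¹ w) = w := by
  rw [toEuc_comp,
    Matrix.mul_nonsing_inv _ (isUnit_iff_ne_zero.mpr (Amat_posdef τ hτ u₁).det_pos.ne')]
  apply euc_ext; intro i
  have h2 : (Matrix.toEuclideanLin (1 : Matrix (Fin n) (Fin n) ℝ) w : Fin n → ℝ)
      = (1 : Matrix (Fin n) (Fin n) ℝ) *ᵥ (w : Fin n → ℝ) := rfl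
  rw [congrFun h2 i, Matrix.one_mulVec]

lemma key_id (τ : ℝ) (hτ : 0 < τ) (u₁ u₂ : Euc n) :
    τ • (Matrix.toEuclideanLin (Amat τ u₁)⁻¹ u₂)
      + (⟪u₁, Matrix.toEuclideanLin (Amat τ u₁)⁻¹ u₂⟫ : ℝ) • u₁ = u₂ := by
  have h := Amat_inv_id τ hτ u₁ u₂
  rw [Amat_apply] at h
  exact h

/-! ### EReal helpers -/

lemma ereal_ne_top_of_add_coe_le {x y : EReal} {r : ℝ} (hy : y ≠ ⊤) (h : x + (r : EReal) ≤ y) :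
    x ≠ ⊤ := by
  intro hx
  rw [hx, EReal.top_add_coe] at h
  exact hy (top_le_iff.mp h)

lemma exists_coe_of_ne {x : EReal} (hb : x ≠ ⊥) (ht : x ≠ ⊤) : ∃ r : ℝ, x = (r : EReal) :=
  ⟨x.toReal, (EReal.coe_toReal ht hb).symm⟩

lemma min_finite {h₁ : Euc n → EReal} (hprop : ProperF h₁) {p : Euc n} {φ : Euc n → ℝ}
    (hmin : ∀ w, h₁ p + ((φ p : ℝ) : EReal) ≤ h₁ w + ((φ w : ℝ) : EReal)) :
    ∃ r : ℝ, h₁ p = (r : EReal) := by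
  obtain ⟨x0, hx0⟩ := hprop.2
  obtain ⟨r0, hr0⟩ := exists_coe_of_ne (hprop.1 x0) hx0
  have h := hmin x0
  rw [hr0, ← EReal.coe_add] at h
  exact exists_coe_of_ne (hprop.1 p) (ereal_ne_top_of_add_coe_le (EReal.coe_ne_top _) h)

end AuxLemmas

section CoreConvex

variable {n : ℕ}

lemma quad_expand {L : Euc n →ₗ[ℝ] Euc n} (hsym : ∀ a b : Euc n, (⟪L a, b⟫ : ℝ) = ⟪a, L b⟫)
    (a d : Euc n) (t : ℝ) :
    (⟪a + t • d, L (a + t • d)⟫ : ℝ) = ⟪a, L a⟫ + 2 * t * ⟪L a, d⟫ + t ^ 2 * ⟪d, L d⟫ := by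
  have h1 : (⟪t • d, L a⟫ : ℝ) = t * ⟪L a, d⟫ := by
    rw [real_inner_smul_left, real_inner_comm]
  have h2 : (⟪a, L (t • d)⟫ : ℝ) = t * ⟪L a, d⟫ := by
    rw [L.map_smul, real_inner_smul_right, ← hsym]
  have h3 : (⟪t • d, L (t • d)⟫ : ℝ) = t ^ 2 * ⟪d, L d⟫ := by
    rw [L.map_smul, real_inner_smul_right, real_inner_smul_left]; ring
  rw [map_add, inner_add_left, inner_add_right, inner_add_right, h1, h2, h3]
  ring

lemma esubgrad_of_min {h₁ : Euc n → EReal} (hprop : ProperF h₁) (hconv : EConvexF h₁)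
    {L : Euc n →ₗ[ℝ] Euc n} (hsym : ∀ a b : Euc n, (⟪L a, b⟫ : ℝ) = ⟪a, L b⟫)
    {y p : Euc n}
    (hmin : ∀ w : Euc n, h₁ p + ((⟪p - y, L (p - y)⟫ / 2 : ℝ) : EReal)
      ≤ h₁ w + ((⟪w - y, L (w - y)⟫ / 2 : ℝ) : EReal)) :
    ESubgradAt h₁ (L (y - p)) p := by
  obtain ⟨rp, hrp⟩ := min_finite hprop (φ := fun w => (⟪w - y, L (w - y)⟫ : ℝ) / 2) hmin
  intro w
  rcases eq_or_ne (h₁ w) ⊤ with hw | hw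
  · rw [hw]; exact le_top
  obtain ⟨rw', hrw⟩ := exists_coe_of_ne (hprop.1 w) hw
  rw [hrp, hrw, ← EReal.coe_add, EReal.coe_le_coe_iff]
  have hLyp : (⟪L (y - p), w - p⟫ : ℝ) = -⟪L (p - y), w - p⟫ := by
    have : y - p = -(p - y) := by abel
    rw [this, map_neg, inner_neg_left]
  set c := (⟪w - p, L (w - p)⟫ : ℝ) with hc
  have key : ∀ t : ℝ, 0 < t → t ≤ 1 →
      rp + (⟪L (y - p), w - p⟫ : ℝ) ≤ rw' + t * (c / 2) := by
    intro t ht ht1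
    have hwt := hmin (p + t • (w - p))
    have hcv := hconv p w (1 - t) t (by linarith) ht.le (by ring)
    have heq : (1 - t) • p + t • w = p + t • (w - p) := by
      rw [smul_sub, sub_smul, one_smul]; abel
    rw [heq, hrp, hrw, ← EReal.coe_mul, ← EReal.coe_mul, ← EReal.coe_add] at hcv
    have chain : ((rp + ⟪p - y, L (p - y)⟫ / 2 : ℝ) : EReal)
        ≤ (((1 - t) * rp + t * rw'
            + ⟪p + t • (w - p) - y, L (p + t • (w - p) - y)⟫ / 2 : ℝ) : EReal) := by
      rw [EReal.coe_add, EReal.coe_add, ← hrp]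
      calc h₁ p + ((⟪p - y, L (p - y)⟫ / 2 : ℝ) : EReal)
          ≤ h₁ (p + t • (w - p))
            + ((⟪p + t • (w - p) - y, L (p + t • (w - p) - y)⟫ / 2 : ℝ) : EReal) := hwt
        _ ≤ (((1 - t) * rp + t * rw' : ℝ) : EReal)
            + ((⟪p + t • (w - p) - y, L (p + t • (w - p) - y)⟫ / 2 : ℝ) : EReal) :=
            add_le_add_left hcv _
    rw [EReal.coe_le_coe_iff] at chain
    have hmove : p + t • (w - p) - y = (p - y) + t • (w - p) := by abel
    rw [hmove, quad_expand hsym] at chain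
    rw [hLyp]
    nlinarith [chain]
  rcases le_or_gt c 0 with hcle | hcpos
  · have := key 1 one_pos le_rfl
    nlinarith
  · by_contra hlt
    push_neg at hlt
    set ε := rp + (⟪L (y - p), w - p⟫ : ℝ) - rw' with hε
    have hεpos : 0 < ε := by rw [hε]; linarith
    set t := min 1 (ε / c) with htdef
    have ht : 0 < t := lt_min one_pos (by positivity)
    have ht1 : t ≤ 1 := min_le_left _ _
    have := key t ht ht1
    have htc : t * c ≤ ε := by
      have : t ≤ ε / c := min_le_right _ _
      calc t * c ≤ (ε / c) * c := by nlinarith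
        _ = ε := by field_simp
    nlinarith

lemma min_of_esubgrad {h₁ : Euc n → EReal} (hprop : ProperF h₁)
    {L : Euc n →ₗ[ℝ] Euc n} (hsym : ∀ a b : Euc n, (⟪L a, b⟫ : ℝ) = ⟪a, L b⟫)
    {y p : Euc n}
    (hsub : ESubgradAt h₁ (L (y - p)) p) :
    ∀ w : Euc n, h₁ p + ((⟪p - y, L (p - y)⟫ / 2 + ⟪w - p, L (w - p)⟫ / 2 : ℝ) : EReal)
      ≤ h₁ w + ((⟪w - y, L (w - y)⟫ / 2 : ℝ) : EReal) := by
  have hrpex : ∃ r : ℝ, h₁ p = (r : EReal) := by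
    obtain ⟨x0, hx0⟩ := hprop.2
    obtain ⟨r0, hr0⟩ := exists_coe_of_ne (hprop.1 x0) hx0
    have h := hsub x0
    rw [hr0] at h
    exact exists_coe_of_ne (hprop.1 p) (ereal_ne_top_of_add_coe_le (EReal.coe_ne_top _) h)
  obtain ⟨rp, hrp⟩ := hrpex
  intro w
  rcases eq_or_ne (h₁ w) ⊤ with hw | hw
  · rw [hw, EReal.top_add_coe]; exact le_top
  obtain ⟨rw', hrw⟩ := exists_coe_of_ne (hprop.1 w) hw
  have h := hsub w
  rw [hrp, hrw, ← EReal.coe_add, EReal.coe_le_coe_iff] at h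
  rw [hrp, hrw, ← EReal.coe_add, ← EReal.coe_add, EReal.coe_le_coe_iff]
  have hmove : w - y = (p - y) + (1 : ℝ) • (w - p) := by rw [one_smul]; abel
  have expand := quad_expand hsym (p - y) (w - p) 1
  rw [← hmove] at expand
  have hLyp : (⟪L (y - p), w - p⟫ : ℝ) = -⟪L (p - y), w - p⟫ := by
    have h' : y - p = -(p - y) := by abel
    rw [h', map_neg, inner_neg_left]
  rw [hLyp] at h
  nlinarith [expand, h]

lemma min_unique {h₁ : Euc n → EReal} (hprop : ProperF h₁) (hconv : EConvexF h₁)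
    {L : Euc n →ₗ[ℝ] Euc n} (hsym : ∀ a b : Euc n, (⟪L a, b⟫ : ℝ) = ⟪a, L b⟫)
    (hposq : ∀ v : Euc n, v ≠ 0 → 0 < (⟪v, L v⟫ : ℝ))
    {y p q : Euc n}
    (hp : ∀ w : Euc n, h₁ p + ((⟪p - y, L (p - y)⟫ / 2 : ℝ) : EReal)
      ≤ h₁ w + ((⟪w - y, L (w - y)⟫ / 2 : ℝ) : EReal))
    (hq : ∀ w : Euc n, h₁ q + ((⟪q - y, L (q - y)⟫ / 2 : ℝ) : EReal)
      ≤ h₁ w + ((⟪w - y, L (w - y)⟫ / 2 : ℝ) : EReal)) :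
    p = q := by
  obtain ⟨rp, hrp⟩ := min_finite hprop (φ := fun w => (⟪w - y, L (w - y)⟫ : ℝ) / 2) hp
  obtain ⟨rq, hrq⟩ := min_finite hprop (φ := fun w => (⟪w - y, L (w - y)⟫ : ℝ) / 2) hq
  have hsub := esubgrad_of_min hprop hconv hsym hp
  have hquant := min_of_esubgrad hprop hsym hsub q
  have hback := hq p
  rw [hrp, hrq, ← EReal.coe_add, ← EReal.coe_add, EReal.coe_le_coe_iff] at hquant
  rw [hrp, hrq, ← EReal.coe_add, ← EReal.coe_add, EReal.coe_le_coe_iff] at hback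
  by_contra hne
  have hqp : q - p ≠ 0 := fun h => hne (by
    have := sub_eq_zero.mp h; exact this.symm)
  have := hposq (q - p) hqp
  nlinarith

section LscMachinery

variable {n : ℕ}

lemma lsc_add_cont {h₁ : Euc n → EReal} (hbot : ∀ x, h₁ x ≠ ⊥) (hlsc : LowerSemicontinuous h₁)
    {ψ : Euc n → ℝ} (hψ : Continuous ψ) :
    LowerSemicontinuous (fun w => h₁ w + ((ψ w : ℝ) : EReal)) := by
  intro x c hc
  rcases eq_or_ne c ⊥ with rfl | hcb
  · filter_upwards with w
    rw [gt_iff_lt, bot_lt_iff_ne_bot]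
    intro hbad
    rcases EReal.add_eq_bot_iff.mp hbad with h | h
    · exact hbot w h
    · exact EReal.coe_ne_bot _ h
  · have hct : c ≠ ⊤ := ne_top_of_lt hc
    obtain ⟨cr, rfl⟩ := exists_coe_of_ne hcb hct
    have hz : ∃ z : ℝ, (cr - ψ x < z) ∧ ((z : EReal) < h₁ x) := by
      rcases eq_or_ne (h₁ x) ⊤ with ht | ht
      · exact ⟨cr - ψ x + 1, by linarith, by rw [ht]; exact EReal.coe_lt_top _⟩
      · obtain ⟨rx, hrx⟩ := exists_coe_of_ne (hbot x) ht
        have hc' : ((cr : ℝ) : EReal) < ((rx + ψ x : ℝ) : EReal) := by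
          rw [EReal.coe_add, ← hrx]; exact hc
        rw [EReal.coe_lt_coe_iff] at hc'
        have hlt : cr - ψ x < rx := by linarith
        obtain ⟨z, h1, h2⟩ := exists_between hlt
        exact ⟨z, h1, by rw [hrx]; exact_mod_cast h2⟩
    obtain ⟨z, hz1, hz2⟩ := hz
    set ε := z - (cr - ψ x) with hεdef
    have hεpos : 0 < ε := by rw [hεdef]; linarith
    have hev1 := hlsc x (z : EReal) hz2
    have hev2 : ∀ᶠ w in 𝓝 x, ψ x - ε < ψ w :=
      (hψ.tendsto x).eventually (eventually_gt_nhds (by linarith))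
    filter_upwards [hev1, hev2] with w hw1 hw2
    rcases eq_or_ne (h₁ w) ⊤ with ht | ht
    · rw [ht, EReal.top_add_coe]; exact EReal.coe_lt_top _
    · obtain ⟨rw', hrw⟩ := exists_coe_of_ne (hbot w) ht
      rw [hrw] at hw1
      have hzr : z < rw' := EReal.coe_lt_coe_iff.mp hw1
      have hgoal : ((cr : ℝ) : EReal) < ((rw' + ψ w : ℝ) : EReal) := by
        rw [EReal.coe_lt_coe_iff]; linarith
      show ((cr : ℝ) : EReal) < h₁ w + ((ψ w : ℝ) : EReal)
      rw [hrw, ← EReal.coe_add]; exact hgoal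

lemma lsc_min_compact {f : Euc n → EReal} (hf : LowerSemicontinuous f) {K : Set (Euc n)}
    (hK : IsCompact K) (hne : K.Nonempty) : ∃ p ∈ K, ∀ w ∈ K, f p ≤ f w := by
  set m := sInf (f '' K) with hm
  rcases eq_or_ne m ⊤ with ht | ht
  · obtain ⟨p, hp⟩ := hne
    refine ⟨p, hp, fun w hw => ?_⟩
    have h1 : f p = ⊤ := sInf_eq_top.mp (hm.symm.trans ht) (f p) ⟨p, hp, rfl⟩
    have h2 : f w = ⊤ := sInf_eq_top.mp (hm.symm.trans ht) (f w) ⟨w, hw, rfl⟩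
    rw [h1, h2]
  · have hne' : Nonempty {c : EReal // m < c} := ⟨⟨⊤, lt_top_iff_ne_top.mpr ht⟩⟩
    set Z : {c : EReal // m < c} → Set (Euc n) := fun c => K ∩ f ⁻¹' (Set.Iic c.1) with hZ
    have hdir : Directed (· ⊇ ·) Z := by
      intro a b
      rcases le_total a.1 b.1 with h | h
      · exact ⟨a, Set.Subset.rfl, fun x hx => ⟨hx.1, le_trans hx.2 h⟩⟩
      · exact ⟨b, fun x hx => ⟨hx.1, le_trans hx.2 h⟩, Set.Subset.rfl⟩
    have hZne : ∀ c, (Z c).Nonempty := by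
      intro c
      obtain ⟨v, ⟨x, hxK, rfl⟩, hvlt⟩ := sInf_lt_iff.mp c.2
      exact ⟨x, hxK, le_of_lt hvlt⟩
    have hZcp : ∀ c, IsCompact (Z c) := fun c => hK.inter_right (hf.isClosed_preimage c.1)
    have hZcl : ∀ c, IsClosed (Z c) :=
      fun c => hK.isClosed.inter (hf.isClosed_preimage c.1)
    obtain ⟨p, hp⟩ :=
      IsCompact.nonempty_iInter_of_directed_nonempty_isCompact_isClosed Z hdir hZne hZcp hZcl
    have hpK : p ∈ K := (Set.mem_iInter.mp hp ⟨⊤, lt_top_iff_ne_top.mpr ht⟩).1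
    refine ⟨p, hpK, fun w hw => ?_⟩
    have hfp : f p ≤ m := by
      apply le_of_forall_gt_imp_ge_of_dense
      intro a ha
      exact (Set.mem_iInter.mp hp ⟨a, ha⟩).2
    exact le_trans hfp (sInf_le ⟨w, hw, rfl⟩)

lemma coercive_bound {lam r nv M0 : ℝ} (hlam : 0 < lam) (hr : 0 ≤ r)
    (h : lam / 2 * r ^ 2 ≤ nv * r + M0) (hnv : 0 ≤ nv) :
    r ≤ 1 + (2 / lam) * (nv + |M0|) := by
  by_contra hR
  push_neg at hR
  have h1 : 1 < r := by
    have h2 : 0 ≤ (2 / lam) * (nv + |M0|) := by positivity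
    linarith
  have hrpos : 0 < r := lt_trans one_pos h1
  have hM : M0 ≤ |M0| * r := le_trans (le_abs_self _) (by nlinarith [abs_nonneg M0])
  have e0 : lam / 2 * r ^ 2 ≤ (nv + |M0|) * r := by nlinarith [hM]
  have e1 : lam / 2 * r ≤ nv + |M0| := by nlinarith [e0, hrpos]
  have e2 : r ≤ 2 / lam * (nv + |M0|) := by
    rw [div_mul_eq_mul_div, le_div_iff₀ hlam]; linarith
  linarith

lemma quad_lower_bound {M : Matrix (Fin n) (Fin n) ℝ} (hpd : M.PosDef)
    (hne : ∃ u : Euc n, u ≠ 0) :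
    ∃ lam : ℝ, 0 < lam ∧
      ∀ v : Euc n, lam * ‖v‖ ^ 2 ≤ (⟪v, Matrix.toEuclideanLin M v⟫ : ℝ) := by
  obtain ⟨u, hu⟩ := hne
  have hsph : (Metric.sphere (0 : Euc n) 1).Nonempty := by
    refine ⟨‖u‖⁻¹ • u, ?_⟩
    have hnu : ‖u‖ ≠ 0 := norm_ne_zero_iff.mpr hu
    simp [norm_smul, abs_of_nonneg (inv_nonneg.mpr (norm_nonneg u)), inv_mul_cancel₀ hnu]
  have hLcont : Continuous (Matrix.toEuclideanLin M) :=
    (Matrix.toEuclideanLin M).continuous_of_finiteDimensional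
  have hcont : Continuous fun v : Euc n => (⟪v, Matrix.toEuclideanLin M v⟫ : ℝ) :=
    continuous_id.inner (hLcont.comp continuous_id)
  obtain ⟨v0, hv0mem, hv0min⟩ :=
    (isCompact_sphere (0 : Euc n) 1).exists_isMinOn hsph hcont.continuousOn
  have hv0norm : ‖v0‖ = 1 := by simpa using hv0mem
  have hv0ne : v0 ≠ 0 := by
    intro h; rw [h, norm_zero] at hv0norm; exact one_ne_zero hv0norm.symm
  refine ⟨⟪v0, Matrix.toEuclideanLin M v0⟫, posdef_inner hpd hv0ne, ?_⟩
  intro v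
  rcases eq_or_ne v 0 with rfl | hv
  · simp
  · have hnv : (0:ℝ) < ‖v‖ := norm_pos_iff.mpr hv
    set w := ‖v‖⁻¹ • v with hwdef
    have hmem : w ∈ Metric.sphere (0 : Euc n) 1 := by
      simp [hwdef, norm_smul, abs_of_nonneg (inv_nonneg.mpr (norm_nonneg v)),
        inv_mul_cancel₀ hnv.ne']
    have hle := hv0min hmem
    have hw : (⟪w, Matrix.toEuclideanLin M w⟫ : ℝ)
        = ‖v‖⁻¹ ^ 2 * ⟪v, Matrix.toEuclideanLin M v⟫ := by
      rw [hwdef, _root_.map_smul, real_inner_smul_left, real_inner_smul_right]; ring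
    have hle' : (⟪v0, Matrix.toEuclideanLin M v0⟫ : ℝ)
        ≤ ‖v‖⁻¹ ^ 2 * ⟪v, Matrix.toEuclideanLin M v⟫ := by rw [← hw]; exact hle
    have e3 : ‖v‖⁻¹ ^ 2 * (⟪v, Matrix.toEuclideanLin M v⟫ : ℝ) * ‖v‖ ^ 2
        = ⟪v, Matrix.toEuclideanLin M v⟫ := by
      field_simp
    linarith [mul_le_mul_of_nonneg_right hle' (sq_nonneg ‖v‖), e3]

end LscMachinery

section ProxLemmas

variable {n : ℕ}

/-- The linear map `τ • id`. -/
def tauId (n : ℕ) (τ : ℝ) : Euc n →ₗ[ℝ] Euc n := τ • LinearMap.id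

lemma tauId_apply (τ : ℝ) (v : Euc n) : tauId n τ v = τ • v := rfl

lemma tauId_sym (τ : ℝ) : ∀ a b : Euc n, (⟪tauId n τ a, b⟫ : ℝ) = ⟪a, tauId n τ b⟫ := by
  intro a b
  rw [tauId_apply, tauId_apply, real_inner_smul_left, real_inner_smul_right]

lemma tauId_quad (τ : ℝ) (v : Euc n) : (⟪v, tauId n τ v⟫ : ℝ) = τ * ‖v‖ ^ 2 := by
  rw [tauId_apply, real_inner_smul_right, real_inner_self_eq_norm_sq]

lemma isprox_to_min {h₁ : Euc n → EReal} (hprop : ProperF h₁) {τ : ℝ} (hτ : 0 < τ) {y p : Euc n}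
    (hPp : IsProxPt τ h₁ y p) :
    ∀ w : Euc n, h₁ p + ((⟪p - y, tauId n τ (p - y)⟫ / 2 : ℝ) : EReal)
      ≤ h₁ w + ((⟪w - y, tauId n τ (w - y)⟫ / 2 : ℝ) : EReal) := by
  intro w
  rcases eq_or_ne (h₁ w) ⊤ with hw | hw
  · rw [hw, EReal.top_add_coe]; exact le_top
  obtain ⟨rw', hrw⟩ := exists_coe_of_ne (hprop.1 w) hw
  have h := hPp w
  have hτinv : (0:ℝ) < τ⁻¹ := by positivity
  have hpt : h₁ p ≠ ⊤ := by
    intro htop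
    rw [htop, hrw, EReal.coe_mul_top_of_pos hτinv, EReal.top_add_coe, ← EReal.coe_mul,
      ← EReal.coe_add] at h
    exact (EReal.coe_ne_top _) (top_le_iff.mp h)
  obtain ⟨rp, hrp⟩ := exists_coe_of_ne (hprop.1 p) hpt
  rw [hrp, hrw, ← EReal.coe_mul, ← EReal.coe_mul, ← EReal.coe_add, ← EReal.coe_add,
    EReal.coe_le_coe_iff] at h
  rw [hrp, hrw, tauId_quad, tauId_quad, ← EReal.coe_add, ← EReal.coe_add, EReal.coe_le_coe_iff]
  have hττ : τ * τ⁻¹ = 1 := mul_inv_cancel₀ hτ.ne'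
  nlinarith [mul_le_mul_of_nonneg_left h hτ.le]

lemma exists_scaled_min {h₁ : Euc n → EReal} (hprop : ProperF h₁)
    (hlsc : LowerSemicontinuous h₁)
    {L : Euc n →ₗ[ℝ] Euc n}
    {lam : ℝ} (hlam : 0 < lam) (hlb : ∀ v : Euc n, lam * ‖v‖ ^ 2 ≤ (⟪v, L v⟫ : ℝ))
    {v0 : Euc n} {c0 : ℝ} (hminor : ∀ w : Euc n, ((c0 + ⟪v0, w⟫ : ℝ) : EReal) ≤ h₁ w)
    (y : Euc n) :
    ∃ p : Euc n, ∀ w : Euc n, h₁ p + ((⟪p - y, L (p - y)⟫ / 2 : ℝ) : EReal)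
      ≤ h₁ w + ((⟪w - y, L (w - y)⟫ / 2 : ℝ) : EReal) := by
  set ψ : Euc n → ℝ := fun w => (⟪w - y, L (w - y)⟫ : ℝ) / 2 with hψdef
  have hψcont : Continuous ψ := by
    have hL : Continuous L := L.continuous_of_finiteDimensional
    exact ((continuous_id.sub continuous_const).inner
      (hL.comp (continuous_id.sub continuous_const))).div_const 2
  have hFlsc := lsc_add_cont hprop.1 hlsc hψcont
  obtain ⟨x0, hx0⟩ := hprop.2
  obtain ⟨r0, hr0⟩ := exists_coe_of_ne (hprop.1 x0) hx0
  set m : ℝ := r0 + ψ x0 with hmdef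
  set K : Set (Euc n) := {w | h₁ w + ((ψ w : ℝ) : EReal) ≤ ((m : ℝ) : EReal)} with hKdef
  have hx0K : x0 ∈ K := by
    show h₁ x0 + ((ψ x0 : ℝ) : EReal) ≤ ((m : ℝ) : EReal)
    rw [hr0, ← EReal.coe_add]
  -- membership bound
  set R : ℝ := 1 + (2 / lam) * (‖v0‖ + |m - c0 - ⟪v0, y⟫|) with hRdef
  have hKsub : K ⊆ Metric.closedBall y R := by
    intro w hw
    have hw' : h₁ w + ((ψ w : ℝ) : EReal) ≤ ((m : ℝ) : EReal) := hw
    have hchain : ((c0 + ⟪v0, w⟫ + ψ w : ℝ) : EReal) ≤ ((m : ℝ) : EReal) := by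
      calc ((c0 + ⟪v0, w⟫ + ψ w : ℝ) : EReal)
          = ((c0 + ⟪v0, w⟫ : ℝ) : EReal) + ((ψ w : ℝ) : EReal) := by
            rw [← EReal.coe_add]
        _ ≤ h₁ w + ((ψ w : ℝ) : EReal) := add_le_add_left (hminor w) _
        _ ≤ ((m : ℝ) : EReal) := hw'
    rw [EReal.coe_le_coe_iff] at hchain
    have hquad : lam / 2 * ‖w - y‖ ^ 2 ≤ ψ w := by
      have := hlb (w - y)
      rw [hψdef]; dsimp only; linarith
    have hip : ⟪v0, w⟫ = (⟪v0, w - y⟫ : ℝ) + ⟪v0, y⟫ := by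
      rw [← inner_add_right]; norm_num
    have hcs : -(‖v0‖ * ‖w - y‖) ≤ (⟪v0, w - y⟫ : ℝ) := by
      have := abs_real_inner_le_norm v0 (w - y)
      have h2 := neg_abs_le (⟪v0, w - y⟫ : ℝ)
      linarith
    have hkey : lam / 2 * ‖w - y‖ ^ 2 ≤ ‖v0‖ * ‖w - y‖ + (m - c0 - ⟪v0, y⟫) := by
      linarith [hchain, hquad, hip, hcs]
    have := coercive_bound hlam (norm_nonneg (w - y)) hkey (norm_nonneg v0)
    rw [Metric.mem_closedBall, dist_eq_norm]
    rw [hRdef]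
    exact this
  have hKclosed : IsClosed K := by
    have := hFlsc.isClosed_preimage ((m : ℝ) : EReal)
    exact this
  have hKcomp : IsCompact K :=
    (isCompact_closedBall y R).of_isClosed_subset hKclosed hKsub
  obtain ⟨p, hpK, hpmin⟩ := lsc_min_compact hFlsc hKcomp ⟨x0, hx0K⟩
  refine ⟨p, fun w => ?_⟩
  show h₁ p + ((ψ p : ℝ) : EReal) ≤ h₁ w + ((ψ w : ℝ) : EReal)
  rcases le_or_gt (h₁ w + ((ψ w : ℝ) : EReal)) ((m : ℝ) : EReal) with hw | hw
  · exact hpmin w hw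
  · exact le_trans (le_trans (hpmin x0 hx0K) hx0K) hw.le

end ProxLemmas

section MainAux

variable {n : ℕ}

lemma weaken_min {h₁ : Euc n → EReal} {L : Euc n →ₗ[ℝ] Euc n}
    (hq : ∀ v : Euc n, 0 ≤ (⟪v, L v⟫ : ℝ)) {y p : Euc n}
    (h : ∀ w : Euc n, h₁ p + ((⟪p - y, L (p - y)⟫ / 2 + ⟪w - p, L (w - p)⟫ / 2 : ℝ) : EReal)
      ≤ h₁ w + ((⟪w - y, L (w - y)⟫ / 2 : ℝ) : EReal)) :
    ∀ w : Euc n, h₁ p + ((⟪p - y, L (p - y)⟫ / 2 : ℝ) : EReal)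
      ≤ h₁ w + ((⟪w - y, L (w - y)⟫ / 2 : ℝ) : EReal) := by
  intro w
  refine le_trans (add_le_add_right ?_ _) (h w)
  rw [EReal.coe_le_coe_iff]
  linarith [hq (w - p)]

lemma vector_identity (τ : ℝ) (hτ : 0 < τ) (u₁ u₂ xb p : Euc n) :
    τ • (zetaMap τ u₁ u₂ xb
        (-(⟪u₁, xb + (-(⟪u₂, xb - p⟫ : ℝ)) • (Matrix.toEuclideanLin (Amat τ u₁)⁻¹ u₂) - p⟫ : ℝ),
         -(⟪u₂, xb - p⟫ : ℝ)) - p)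
      = Matrix.toEuclideanLin (Bprox τ u₁ u₂) (xb - p) := by
  set z : Euc n := Matrix.toEuclideanLin (Amat τ u₁)⁻¹ u₂ with hzdef
  set a2 : ℝ := -(⟪u₂, xb - p⟫ : ℝ) with ha2def
  set a1 : ℝ := -(⟪u₁, xb + a2 • z - p⟫ : ℝ) with ha1def
  have hτz : τ • z = u₂ - (⟪u₁, z⟫ : ℝ) • u₁ := eq_sub_of_add_eq (key_id τ hτ u₁ u₂)
  have ha1 : a1 = -(⟪u₁, xb - p⟫ : ℝ) - a2 * (⟪u₁, z⟫ : ℝ) := by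
    rw [ha1def]
    have hre : xb + a2 • z - p = (xb - p) + a2 • z := by abel
    rw [hre, inner_add_right, real_inner_smul_right]; ring
  have hτa1 : τ * (a1 / τ) = a1 := by field_simp
  rw [zetaMap, Bmat_apply]
  calc τ • (xb - (a1 / τ) • u₁ + a2 • z - p)
      = τ • (xb - p) - (τ * (a1 / τ)) • u₁ + a2 • (τ • z) := by module
    _ = τ • (xb - p) - a1 • u₁ + (a2 • u₂ - (a2 * (⟪u₁, z⟫ : ℝ)) • u₁) := by
        rw [hτa1, hτz]; module
    _ = τ • (xb - p) + (⟪u₁, xb - p⟫ : ℝ) • u₁ - (⟪u₂, xb - p⟫ : ℝ) • u₂ := by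
        rw [ha1, ha2def]; module

end MainAux

/-- the system `𝓛(α) = 0` has exactly one solution. -/
theorem Lmap_unique_root
    {n : ℕ} (τ : ℝ) (u₁ u₂ xb : Euc n)
    (h₁ : Euc n → EReal) (P : Euc n → Euc n)
    (hprop : ProperF h₁) (hlsc : LowerSemicontinuous h₁) (hconv : EConvexF h₁)
    (hτ : 0 < τ)
    (hind : LinearIndependent ℝ ![u₁, u₂])
    (hpd : (Bprox τ u₁ u₂).PosDef)
    (hP : ∀ y : Euc n, IsProxPt τ h₁ y (P y)) :
    ∃! α : ℝ × ℝ, Lmap τ u₁ u₂ xb P α = 0 := by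
  classical
  set z : Euc n := Matrix.toEuclideanLin (Amat τ u₁)⁻¹ u₂ with hzdef
  set LB : Euc n →ₗ[ℝ] Euc n := Matrix.toEuclideanLin (Bprox τ u₁ u₂) with hLBdef
  have hBsym : ∀ a b : Euc n, (⟪LB a, b⟫ : ℝ) = ⟪a, LB b⟫ := by
    rw [hLBdef]; exact symm_inner (transpose_eq_of_hermitian hpd.1)
  have hposq : ∀ v : Euc n, v ≠ 0 → 0 < (⟪v, LB v⟫ : ℝ) := by
    rw [hLBdef]; exact fun v hv => posdef_inner hpd hv
  have hqnn : ∀ v : Euc n, 0 ≤ (⟪v, LB v⟫ : ℝ) := by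
    intro v
    rcases eq_or_ne v 0 with rfl | hv
    · simp
    · exact (hposq v hv).le
  have hτqnn : ∀ v : Euc n, 0 ≤ (⟪v, tauId n τ v⟫ : ℝ) := by
    intro v; rw [tauId_quad]; positivity
  have hτpos : ∀ v : Euc n, v ≠ 0 → 0 < (⟪v, tauId n τ v⟫ : ℝ) := by
    intro v hv; rw [tauId_quad]
    have hv' : 0 < ‖v‖ := norm_pos_iff.mpr hv
    positivity
  have hu1 : u₁ ≠ 0 := by
    have h := hind.ne_zero 0
    simpa using h
  obtain ⟨lam, hlam, hlb⟩ := quad_lower_bound hpd ⟨u₁, hu1⟩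
  rw [← hLBdef] at hlb
  -- affine minorant of h₁ from the prox point at `xb`
  have hmin0 := isprox_to_min hprop hτ (hP xb)
  have hsub0 : ESubgradAt h₁ (tauId n τ (xb - P xb)) (P xb) :=
    esubgrad_of_min hprop hconv (tauId_sym τ) hmin0
  obtain ⟨rp0, hrp0⟩ := min_finite hprop
    (φ := fun w => (⟪w - xb, tauId n τ (w - xb)⟫ : ℝ) / 2) hmin0
  have hminor : ∀ w : Euc n,
      ((rp0 - ⟪tauId n τ (xb - P xb), P xb⟫ + ⟪tauId n τ (xb - P xb), w⟫ : ℝ) : EReal)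
        ≤ h₁ w := by
    intro w
    have h := hsub0 w
    rw [hrp0] at h
    have heq : (rp0 - ⟪tauId n τ (xb - P xb), P xb⟫ + ⟪tauId n τ (xb - P xb), w⟫ : ℝ)
        = rp0 + ⟪tauId n τ (xb - P xb), w - P xb⟫ := by
      rw [inner_sub_right]; ring
    rw [heq, EReal.coe_add]
    exact h
  -- the scaled proximal point
  obtain ⟨xs, hxs⟩ := exists_scaled_min hprop hlsc hlam hlb hminor xb
  have hsubB : ESubgradAt h₁ (LB (xb - xs)) xs :=
    esubgrad_of_min hprop hconv hBsym hxs
  set a2 : ℝ := -(⟪u₂, xb - xs⟫ : ℝ) with ha2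
  set a1 : ℝ := -(⟪u₁, xb + a2 • z - xs⟫ : ℝ) with ha1
  have hVI : τ • (zetaMap τ u₁ u₂ xb (a1, a2) - xs) = LB (xb - xs) := by
    rw [ha1, ha2, hzdef, hLBdef]
    exact vector_identity τ hτ u₁ u₂ xb xs
  have hsubτ : ESubgradAt h₁ (tauId n τ (zetaMap τ u₁ u₂ xb (a1, a2) - xs)) xs := by
    have he : tauId n τ (zetaMap τ u₁ u₂ xb (a1, a2) - xs) = LB (xb - xs) := by
      rw [tauId_apply, hVI]
    rw [he]; exact hsubB
  have hxs_prox :=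
    weaken_min hτqnn (min_of_esubgrad hprop (tauId_sym τ) hsubτ)
  have hP_prox := isprox_to_min hprop hτ (hP (zetaMap τ u₁ u₂ xb (a1, a2)))
  have hPζ : xs = P (zetaMap τ u₁ u₂ xb (a1, a2)) :=
    min_unique hprop hconv (tauId_sym τ) hτpos hxs_prox hP_prox
  have hroot : Lmap τ u₁ u₂ xb P (a1, a2) = 0 := by
    have hunf : Lmap τ u₁ u₂ xb P (a1, a2)
        = (⟪u₁, xb + a2 • z - P (zetaMap τ u₁ u₂ xb (a1, a2))⟫ + a1,
           ⟪u₂, xb - P (zetaMap τ u₁ u₂ xb (a1, a2))⟫ + a2) := rfl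
    rw [hunf, ← hPζ]
    have e1 : (⟪u₁, xb + a2 • z - xs⟫ : ℝ) + a1 = 0 := by rw [ha1]; ring
    have e2 : (⟪u₂, xb - xs⟫ : ℝ) + a2 = 0 := by rw [ha2]; ring
    rw [e1, e2]
    rfl
  refine ⟨(a1, a2), hroot, ?_⟩
  rintro ⟨b1, b2⟩ hβ
  set q : Euc n := P (zetaMap τ u₁ u₂ xb (b1, b2)) with hqdef
  have h1 : (⟪u₁, xb + b2 • z - q⟫ : ℝ) + b1 = 0 := congrArg Prod.fst hβ
  have h2 : (⟪u₂, xb - q⟫ : ℝ) + b2 = 0 := congrArg Prod.snd hβ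
  have hb2 : b2 = -(⟪u₂, xb - q⟫ : ℝ) := by linarith
  have hb1 : b1 = -(⟪u₁, xb + b2 • z - q⟫ : ℝ) := by linarith
  have hpair : (b1, b2)
      = (-(⟪u₁, xb + (-(⟪u₂, xb - q⟫ : ℝ)) • z - q⟫ : ℝ), -(⟪u₂, xb - q⟫ : ℝ)) := by
    have hb1' : b1 = -(⟪u₁, xb + (-(⟪u₂, xb - q⟫ : ℝ)) • z - q⟫ : ℝ) := by
      rw [← hb2]; exact hb1
    rw [Prod.mk.injEq]
    exact ⟨hb1', hb2⟩
  have hVIβ : τ • (zetaMap τ u₁ u₂ xb (b1, b2) - q) = LB (xb - q) := by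
    rw [congrArg (zetaMap τ u₁ u₂ xb) hpair, hzdef, hLBdef]
    exact vector_identity τ hτ u₁ u₂ xb q
  have hsubτβ : ESubgradAt h₁
      (tauId n τ (zetaMap τ u₁ u₂ xb (b1, b2) - q)) q :=
    esubgrad_of_min hprop hconv (tauId_sym τ)
      (isprox_to_min hprop hτ (hP (zetaMap τ u₁ u₂ xb (b1, b2))))
  have hsubBβ : ESubgradAt h₁ (LB (xb - q)) q := by
    have he : LB (xb - q) = tauId n τ (zetaMap τ u₁ u₂ xb (b1, b2) - q) := by
      rw [tauId_apply, hVIβ]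
    rw [he]; exact hsubτβ
  have hqmin := weaken_min hqnn (min_of_esubgrad hprop hBsym hsubBβ)
  have hqeq : xs = q := min_unique hprop hconv hBsym hposq hxs hqmin
  have e2 : b2 = a2 := by rw [hb2, ha2, hqeq]
  have e1 : b1 = a1 := by rw [hb1, ha1, e2, hqeq]
  rw [Prod.mk.injEq]
  exact ⟨e1, e2⟩
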